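/- Let 𝒫₀ be a nonempty set of Borel probability measures on ℝ and let P be a probability measure on the canonical space ℝ^ℕ that is kernel-constructed from 𝒫₀. Then for every bounded continuous function φ : ℝ → ℝ and every i ≥ 1, P-almost surely −sup_{Q∈𝒫₀} ∫ (−φ) dQ ≤ E_P[φ(X_i) | F_{i−1}] ≤ sup_{Q∈𝒫₀} ∫ φ dQ, where E_P[· | F_{i−1}] denotes conditional expectation with respect to P (and F₀ is the trivial σ-algebra). -/

import Mathlib

open MeasureTheory ProbabilityTheory Filter
open scoped ENNReal

noncomputable section

/-- The finite-dimensional distributions built by iterating the kernels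
(Ionescu–Tulcea construction): `seqMeasure κ 0` is the trivial measure on the
empty product, and `seqMeasure κ (n+1)` is obtained from `seqMeasure κ n` by
composing with the kernel `κ n` and gluing the new coordinate at the end. -/
def seqMeasure (κ : (n : ℕ) → Kernel (Fin n → ℝ) ℝ) : (n : ℕ) → Measure (Fin n → ℝ)
  | 0 => Measure.dirac (fun i => i.elim0)
  | n + 1 => ((seqMeasure κ n).compProd (κ n)).map (fun p => Fin.snoc p.1 p.2)

/-- A probability measure `P` on the canonical space `ℝ^ℕ` is kernel-constructed from a
set `𝒫₀` of probability measures on `ℝ` if it is the Ionescu–Tulcea measure determined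
by an initial law in `𝒫₀` and Markov kernels all of whose values lie in `𝒫₀`
(the initial law is `κ 0` applied to the empty tuple). -/
def KernelConstructed (𝒫₀ : Set (Measure ℝ)) (P : Measure (ℕ → ℝ)) : Prop :=
  ∃ κ : (n : ℕ) → Kernel (Fin n → ℝ) ℝ,
    (∀ n x, κ n x ∈ 𝒫₀) ∧
    ∀ n : ℕ, P.map (fun ω (i : Fin n) => ω i.val) = seqMeasure κ n

/-- The canonical filtration `F_n = σ(X_1, …, X_n)` on `ℝ^ℕ`. -/
def canonicalFiltration (n : ℕ) : MeasurableSpace (ℕ → ℝ) :=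
  MeasurableSpace.comap (fun ω (i : Fin n) => ω i.val) inferInstance

/- Auxiliary lemmas -/

lemma measurable_finSnoc (n : ℕ) :
    Measurable (fun p : (Fin n → ℝ) × ℝ => (Fin.snoc p.1 p.2 : Fin (n + 1) → ℝ)) := by
  refine measurable_pi_lambda _ fun j => ?_
  refine Fin.lastCases ?_ ?_ j
  · simpa [Fin.snoc_last] using measurable_snd
  · intro k
    simpa [Fin.snoc_castSucc, Function.comp_def] using (measurable_pi_apply k).comp measurable_fst

lemma seqMeasure_isProbabilityMeasure (κ : (n : ℕ) → Kernel (Fin n → ℝ) ℝ)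
    (hM : ∀ n, IsMarkovKernel (κ n)) :
    ∀ n, IsProbabilityMeasure (seqMeasure κ n)
  | 0 => by rw [seqMeasure]; infer_instance
  | n + 1 => by
    haveI := seqMeasure_isProbabilityMeasure κ hM n
    haveI := hM n
    rw [seqMeasure]
    exact Measure.isProbabilityMeasure_map (measurable_finSnoc n).aemeasurable

lemma abs_integral_le_of_abs_le {Q : Measure ℝ} [IsProbabilityMeasure Q] {ψ : ℝ → ℝ} {M : ℝ}
    (h : ∀ x, |ψ x| ≤ M) : |∫ x, ψ x ∂Q| ≤ M := by
  have h2 : ∀ᵐ x ∂Q, ‖ψ x‖ ≤ M := ae_of_all _ fun x => by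
    rw [Real.norm_eq_abs]; exact h x
  have := norm_integral_le_of_norm_le_const (μ := Q) h2
  rw [Real.norm_eq_abs] at this
  simpa [measure_univ] using this

/-- if `P` is kernel-constructed from a nonempty set `𝒫₀` of Borel
probability measures on `ℝ`, then for every bounded continuous `φ` and every
coordinate `i` (0-indexed, so `X_i` is the `(i+1)`-st variable, conditioned on
`F_i = σ(X_1,…,X_i)`), `P`-a.s.
`-sup_{Q∈𝒫₀} ∫ -φ dQ ≤ E_P[φ(X_i) | F_{i-1}] ≤ sup_{Q∈𝒫₀} ∫ φ dQ`. -/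
theorem conditional_expectation_bounds
    (𝒫₀ : Set (Measure ℝ)) (h₀ : 𝒫₀.Nonempty)
    (hprob : ∀ Q ∈ 𝒫₀, IsProbabilityMeasure Q)
    (P : Measure (ℕ → ℝ)) (hP : IsProbabilityMeasure P)
    (hKC : KernelConstructed 𝒫₀ P)
    (φ : ℝ → ℝ) (hφc : Continuous φ) (hφb : ∃ M : ℝ, ∀ x, |φ x| ≤ M) (i : ℕ) :
    ∀ᵐ ω ∂P,
      -(⨆ Q ∈ 𝒫₀, ∫ x, -φ x ∂Q) ≤ (P[fun ω' => φ (ω' i) | canonicalFiltration i]) ω ∧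
      (P[fun ω' => φ (ω' i) | canonicalFiltration i]) ω ≤ ⨆ Q ∈ 𝒫₀, ∫ x, φ x ∂Q := by
  obtain ⟨M, hM⟩ := hφb
  have hM0 : 0 ≤ M := le_trans (abs_nonneg _) (hM 0)
  obtain ⟨κ, hmem, hmap⟩ := hKC
  haveI hMarkov : ∀ n, IsMarkovKernel (κ n) := fun n => ⟨fun x => hprob _ (hmem n x)⟩
  haveI hseq : ∀ n, IsProbabilityMeasure (seqMeasure κ n) :=
    seqMeasure_isProbabilityMeasure κ hMarkov
  -- projections
  have hprojm : ∀ n, Measurable (fun ω (j : Fin n) => ω (j : ℕ) : (ℕ → ℝ) → Fin n → ℝ) :=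
    fun n => measurable_pi_lambda _ fun j => measurable_pi_apply _
  have hm : canonicalFiltration i ≤ (inferInstance : MeasurableSpace (ℕ → ℝ)) :=
    (hprojm i).comap_le
  -- the function of interest and its conditional-expectation candidate
  set f : (ℕ → ℝ) → ℝ := fun ω' => φ (ω' i) with hf_def
  set G : (Fin i → ℝ) → ℝ := fun x => ∫ y, φ y ∂(κ i x) with hG_def
  set g : (ℕ → ℝ) → ℝ := fun ω => G (fun j : Fin i => ω (j : ℕ)) with hg_def
  have hGsm : StronglyMeasurable G :=
    StronglyMeasurable.integral_kernel_prod_right (κ := κ i) (f := fun _ y => φ y)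
      (hφc.comp continuous_snd).stronglyMeasurable
  have hG_bdd : ∀ x, |G x| ≤ M := by
    intro x
    haveI := hprob _ (hmem i x)
    exact abs_integral_le_of_abs_le hM
  have hf_meas : AEStronglyMeasurable f P :=
    ((hφc.comp (continuous_apply i)).stronglyMeasurable).aestronglyMeasurable
  have hf_int : Integrable f P :=
    Integrable.mono' (integrable_const M) hf_meas (ae_of_all _ fun ω => by
      simpa using hM (ω i))
  have hg_sm : StronglyMeasurable g := hGsm.comp_measurable (hprojm i)
  have hg_int : Integrable g P :=
    Integrable.mono' (integrable_const M) hg_sm.aestronglyMeasurable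
      (ae_of_all _ fun ω => by simpa using hG_bdd _)
  -- g is measurable w.r.t. the filtration
  have hgm : AEStronglyMeasurable[canonicalFiltration i] g P := by
    refine StronglyMeasurable.aestronglyMeasurable ?_
    exact hGsm.comp_measurable (Measurable.of_comap_le le_rfl)
  -- set-integral identity
  have hg_eq : ∀ s : Set (ℕ → ℝ), MeasurableSet[canonicalFiltration i] s → P s < ∞ →
      ∫ ω in s, g ω ∂P = ∫ ω in s, f ω ∂P := by
    rintro s ⟨B, hB, rfl⟩ -
    have hinit : Measurable (Fin.init : (Fin (i + 1) → ℝ) → Fin i → ℝ) :=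
      measurable_pi_lambda _ fun j => measurable_pi_apply _
    set B' : Set (Fin (i + 1) → ℝ) := Fin.init ⁻¹' B with hB'_def
    have hB' : MeasurableSet B' := hinit hB
    have hpre : ((fun ω (j : Fin i) => ω (j : ℕ)) : (ℕ → ℝ) → Fin i → ℝ) ⁻¹' B
        = ((fun ω (j : Fin (i + 1)) => ω (j : ℕ)) : (ℕ → ℝ) → Fin (i+1) → ℝ) ⁻¹' B' := by
      ext ω
      have h1 : Fin.init (fun j : Fin (i + 1) => ω (j : ℕ)) = fun j : Fin i => ω (j : ℕ) :=
        funext fun j => by simp [Fin.init]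
      simp [hB'_def, h1]
    -- RHS
    have hφlastc : Continuous (fun q : Fin (i + 1) → ℝ => φ (q (Fin.last i))) :=
      hφc.comp (continuous_apply _)
    have hRHS : ∫ ω in ((fun ω (j : Fin i) => ω (j : ℕ)) : (ℕ → ℝ) → Fin i → ℝ) ⁻¹' B, f ω ∂P
        = ∫ x in B, G x ∂(seqMeasure κ i) := by
      have h1 : ∫ q in B', φ (q (Fin.last i)) ∂(P.map (fun ω (j : Fin (i + 1)) => ω (j : ℕ)))
          = ∫ ω in ((fun ω (j : Fin (i + 1)) => ω (j : ℕ)) : (ℕ → ℝ) → Fin (i+1) → ℝ) ⁻¹' B', f ω ∂P := by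
        rw [setIntegral_map hB' hφlastc.aestronglyMeasurable (hprojm (i + 1)).aemeasurable]
        rfl
      rw [hpre, ← h1, hmap (i + 1)]
      show ∫ q in B', φ (q (Fin.last i))
          ∂(((seqMeasure κ i).compProd (κ i)).map (fun p => Fin.snoc p.1 p.2))
          = ∫ x in B, G x ∂(seqMeasure κ i)
      rw [setIntegral_map hB' hφlastc.aestronglyMeasurable (measurable_finSnoc i).aemeasurable]
      have hpre2 : (fun p : (Fin i → ℝ) × ℝ => (Fin.snoc p.1 p.2 : Fin (i + 1) → ℝ)) ⁻¹' B'
          = B ×ˢ Set.univ := by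
        ext p
        simp [hB'_def, Fin.init_snoc]
      have hfun : ∀ p : (Fin i → ℝ) × ℝ,
          φ ((Fin.snoc p.1 p.2 : Fin (i + 1) → ℝ) (Fin.last i)) = φ p.2 := by
        intro p; rw [Fin.snoc_last]
      rw [hpre2]
      rw [setIntegral_congr_fun (hB.prod MeasurableSet.univ) (fun p _ => hfun p)]
      have hint : IntegrableOn (fun p : (Fin i → ℝ) × ℝ => φ p.2) (B ×ˢ Set.univ)
          ((seqMeasure κ i).compProd (κ i)) :=
        (Integrable.mono' (integrable_const M)
          ((hφc.comp continuous_snd).stronglyMeasurable).aestronglyMeasurable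
          (ae_of_all _ fun p => by simpa using hM p.2)).integrableOn
      rw [Measure.setIntegral_compProd hB MeasurableSet.univ hint]
      simp [hG_def]
    -- LHS
    have hLHS : ∫ ω in ((fun ω (j : Fin i) => ω (j : ℕ)) : (ℕ → ℝ) → Fin i → ℝ) ⁻¹' B, g ω ∂P
        = ∫ x in B, G x ∂(seqMeasure κ i) := by
      rw [← hmap i, setIntegral_map hB hGsm.aestronglyMeasurable (hprojm i).aemeasurable]
    rw [hLHS, hRHS]
  haveI : SigmaFinite (P.trim hm) := by infer_instance
  have hcond : g =ᵐ[P] P[f | canonicalFiltration i] :=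
    ae_eq_condExp_of_forall_setIntegral_eq hm hf_int
      (fun s _ _ => hg_int.integrableOn) hg_eq hgm
  -- bounds on g
  have hbound : ∀ ω, -(⨆ Q ∈ 𝒫₀, ∫ x, -φ x ∂Q) ≤ g ω ∧ g ω ≤ ⨆ Q ∈ 𝒫₀, ∫ x, φ x ∂Q := by
    intro ω
    set Q₀ : Measure ℝ := κ i (fun j : Fin i => ω (j : ℕ)) with hQ₀
    have hQ₀mem : Q₀ ∈ 𝒫₀ := hmem i _
    have key : ∀ ψ : ℝ → ℝ, (∀ x, |ψ x| ≤ M) →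
        ∫ x, ψ x ∂Q₀ ≤ ⨆ Q ∈ 𝒫₀, ∫ x, ψ x ∂Q := by
      intro ψ hψ
      have hle : ∀ Q ∈ 𝒫₀, ∫ x, ψ x ∂Q ≤ M := by
        intro Q hQ
        haveI := hprob Q hQ
        exact (abs_le.mp (abs_integral_le_of_abs_le hψ)).2
      have hbdd : BddAbove (Set.range fun Q : Measure ℝ => ⨆ _ : Q ∈ 𝒫₀, ∫ x, ψ x ∂Q) := by
        refine ⟨M, ?_⟩
        rintro _ ⟨Q, rfl⟩
        exact Real.iSup_le (fun hQ => hle Q hQ) hM0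
      have h1 : ∫ x, ψ x ∂Q₀ ≤ ⨆ _ : Q₀ ∈ 𝒫₀, ∫ x, ψ x ∂Q₀ := by
        refine le_ciSup (f := fun _ : Q₀ ∈ 𝒫₀ => ∫ x, ψ x ∂Q₀) ?_ hQ₀mem
        exact ⟨∫ x, ψ x ∂Q₀, by rintro _ ⟨h, rfl⟩; exact le_rfl⟩
      exact h1.trans (le_ciSup hbdd Q₀)
    constructor
    · have h1 : ∫ x, -φ x ∂Q₀ ≤ ⨆ Q ∈ 𝒫₀, ∫ x, -φ x ∂Q :=
        key (fun x => -φ x) (fun x => by simpa using hM x)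
      have h2 : ∫ x, -φ x ∂Q₀ = -(g ω) := by
        simp [integral_neg, hg_def, hG_def, hQ₀]
      rw [h2] at h1
      linarith
    · exact key φ hM
  filter_upwards [hcond] with ω hω
  rw [← hω]
  exact hbound ω

end
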